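/- In the setting of the construction, let D_i := pos{y_i^j − y_i⁰ : j = 1,…,d} be the internal cone of the simplex Δ_i at its apex y_i⁰. Then C(y_i − y_i⁰, arctan(√2·r/(d−1))) ⊆ D_i ⊆ C(y_i − y_i⁰, arctan(√2·r)), where for z ≠ 0 and α ∈ [0, π/2], C(z, α) := {x ∈ R^d : ∠(x, z) ≤ α} is the closed circular cone with axis {tz : t ≥ 0} and angle α. -/

import Mathlib

open MeasureTheory ProbabilityTheory Real Set Filter
open scoped ENNReal NNReal RealInnerProductSpace MeasureTheory

noncomputable section

abbrev Euc (d : ℕ) := EuclideanSpace ℝ (Fin d)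

/-- The standard Gaussian measure `γ_d` on `ℝ^d`. -/
noncomputable def stdGaussian (d : ℕ) : Measure (Euc d) :=
  volume.withDensity fun x => ENNReal.ofReal ((2 * π) ^ (-(d : ℝ) / 2) * Real.exp (-‖x‖ ^ 2 / 2))

/-- The radius `r(n) = sqrt(2 log n − log log n)`. -/
noncomputable def rr (n : ℕ) : ℝ := Real.sqrt (2 * Real.log n - Real.log (Real.log n))

/-- Configuration data for the simplex construction: `y` lies on the sphere of radius `r`,
and `yv 1, …, yv d` are the vertices of a regular `(d−1)`-dimensional simplex lying in the
tangent hyperplane of the sphere at `y`, with circumcentre `y` and circumradius `√2`. -/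
structure SimplexConfig (d : ℕ) (r : ℝ) (y : Euc d) (yv : Fin d → Euc d) : Prop where
  norm_y : ‖y‖ = r
  mem_tangent : ∀ j, (inner ℝ (yv j) y : ℝ) = r ^ 2
  circumradius : ∀ j, ‖yv j - y‖ = Real.sqrt 2
  regular : ∃ s : ℝ, 0 < s ∧ ∀ j k : Fin d, j ≠ k → ‖yv j - yv k‖ = s

/-- The apex `y⁰ = (1 + r^{−2}) y` of the simplex `Δ`. -/
noncomputable def apexPt {d : ℕ} (r : ℝ) (y : Euc d) : Euc d := (1 + (r ^ 2)⁻¹) • y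

/-- The simplex `Δ = conv(y⁰, y¹, …, y^d)`. -/
noncomputable def simplexΔ {d : ℕ} (r : ℝ) (y : Euc d) (yv : Fin d → Euc d) : Set (Euc d) :=
  convexHull ℝ (insert (apexPt r y) (Set.range yv))

/-- The vertices of `Δ`: index `0` is the apex `y⁰`, index `j+1` is `y^{j+1}`. -/
noncomputable def vertexOf {d : ℕ} (r : ℝ) (y : Euc d) (yv : Fin d → Euc d) :
    Fin (d + 1) → Euc d :=
  Fin.cons (apexPt r y) yv

/-- The homothetic copy `Δ^j := y^j + c₂ (Δ − y^j)` of `Δ` with centre the vertex `y^j` and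
ratio `c₂`. -/
noncomputable def smallSimplex {d : ℕ} (c₂ r : ℝ) (y : Euc d) (yv : Fin d → Euc d)
    (j : Fin (d + 1)) : Set (Euc d) :=
  (fun x => vertexOf r y yv j + c₂ • (x - vertexOf r y yv j)) '' simplexΔ r y yv

/-- The positive hull `pos{v j}` of a finite family of vectors. -/
def posHull {d : ℕ} {ι : Type} [Fintype ι] (v : ι → Euc d) : Set (Euc d) :=
  {x | ∃ c : ι → ℝ, (∀ i, 0 ≤ c i) ∧ x = ∑ i, c i • v i}

/-- The closed circular cone `C(z, α)` with apex `0`, axis `{tz : t ≥ 0}` and angle `α`,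
i.e. the set of `x` with `∠(x,z) ≤ α` (together with the apex `0`). -/
def circCone {d : ℕ} (z : Euc d) (α : ℝ) : Set (Euc d) :=
  {x | Real.cos α * (‖x‖ * ‖z‖) ≤ (inner ℝ x z : ℝ)}

set_option maxHeartbeats 2000000 in
theorem simplex_cone_aux (d : ℕ) (hd : 1 ≤ d) (r : ℝ) (hr : 0 < r) (y : Euc d) (yv : Fin d → Euc d)
    (cfg : SimplexConfig d r y yv) :
    circCone (y - apexPt r y) (Real.arctan (Real.sqrt 2 * r / ((d : ℝ) - 1))) ⊆
      posHull (fun j : Fin d => yv j - apexPt r y) ∧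
    posHull (fun j : Fin d => yv j - apexPt r y) ⊆
      circCone (y - apexPt r y) (Real.arctan (Real.sqrt 2 * r)) := by
  haveI : NeZero d := ⟨by omega⟩
  obtain ⟨s, hs, hreg⟩ := cfg.regular
  set u : Fin d → Euc d := fun j => yv j - y with hu
  set c : ℝ := 2 - s ^ 2 / 2 with hcdef
  have hyy : ⟪y, y⟫ = r ^ 2 := by rw [real_inner_self_eq_norm_sq, cfg.norm_y]
  have huy : ∀ j, ⟪u j, y⟫ = 0 := fun j => by
    simp [hu, inner_sub_left, cfg.mem_tangent j, hyy, cfg.norm_y]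
  have hnu : ∀ j, ‖u j‖ = Real.sqrt 2 := fun j => cfg.circumradius j
  have hnu2 : ∀ j, ‖u j‖ ^ 2 = 2 := fun j => by
    rw [hnu j, Real.sq_sqrt]; norm_num
  have hun : ∀ j, ⟪u j, u j⟫ = 2 := fun j => by
    rw [real_inner_self_eq_norm_sq, hnu2 j]
  have huu : ∀ j k, j ≠ k → ⟪u j, u k⟫ = c := by
    intro j k hjk
    have h1 : ‖u j - u k‖ = s := by
      have he : u j - u k = yv j - yv k := by simp [hu]
      rw [he]; exact hreg j k hjk
    have h2 : ‖u j - u k‖ ^ 2 = s ^ 2 := by rw [h1]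
    rw [norm_sub_sq_real, hnu2 j, hnu2 k] at h2
    rw [hcdef]; linarith
  have hclt : c < 2 := by rw [hcdef]; nlinarith
  -- key inner-product-of-combination identity
  have inner_sum_u : ∀ (l : Fin d → ℝ) (m : Fin d),
      ⟪∑ i, l i • u i, u m⟫ = c * (∑ i, l i) + (2 - c) * l m := by
    intro l m
    rw [sum_inner]
    have h2 : ∀ i, ⟪l i • u i, u m⟫ = c * l i + (if i = m then (2 - c) * l i else 0) := by
      intro i
      rw [real_inner_smul_left]
      by_cases hi : i = m
      · subst hi; rw [hun i]; simp; ring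
      · rw [huu i m hi]; simp [hi]; ring
    rw [Finset.sum_congr rfl fun i _ => h2 i, Finset.sum_add_distrib, Finset.sum_ite_eq']
    simp [Finset.mul_sum]
  -- a combination that vanishes has all coefficients equal
  have key : ∀ g : Fin d → ℝ, (∑ i, g i • u i) = 0 → ∀ m, c * (∑ i, g i) + (2 - c) * g m = 0 := by
    intro g hg m
    have := inner_sum_u g m
    rw [hg] at this
    simp at this
    linarith [this]
  -- d+1 vectors y, u 0, ..., u (d-1) are dependent
  have hdep : ¬ LinearIndependent ℝ (Fin.cons y u : Fin (d + 1) → Euc d) := by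
    intro h
    have hcard := h.fintype_card_le_finrank
    rw [finrank_euclideanSpace_fin, Fintype.card_fin] at hcard
    omega
  obtain ⟨g, hg, i0, hi0⟩ := Fintype.not_linearIndependent_iff.mp hdep
  rw [Fin.sum_univ_succ] at hg
  simp only [Fin.cons_zero, Fin.cons_succ] at hg
  have hg0 : g 0 = 0 := by
    have h1 : ⟪g 0 • y + ∑ j, g j.succ • u j, y⟫ = 0 := by rw [hg]; simp
    rw [inner_add_left, real_inner_smul_left, hyy, sum_inner] at h1
    simp only [real_inner_smul_left] at h1
    have h2 : (∑ j : Fin d, g j.succ * ⟪u j, y⟫) = 0 := by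
      apply Finset.sum_eq_zero; intro j _; rw [huy j]; ring
    rw [h2, add_zero] at h1
    have : r ^ 2 ≠ 0 := by positivity
    exact mul_eq_zero.mp h1 |>.resolve_right this
  have hrel : (∑ j, g j.succ • u j) = 0 := by
    rw [hg0] at hg; simpa using hg
  have hconst : ∀ m k : Fin d, g m.succ = g k.succ := by
    intro m k
    have h1 := key _ hrel m
    have h2 := key _ hrel k
    have h2c : (2 : ℝ) - c ≠ 0 := by linarith
    have := sub_eq_zero.mpr (h1.trans h2.symm)
    have h4 := (mul_eq_zero.mp (by linear_combination this : (2 - c) * (g m.succ - g k.succ) = 0)).resolve_left h2c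
    linarith
  -- the nonzero coefficient is among the u's
  obtain ⟨j0, hj0⟩ : ∃ j0 : Fin d, g j0.succ ≠ 0 := by
    rcases Fin.eq_zero_or_eq_succ i0 with h | ⟨j, hj⟩
    · exact absurd (h ▸ hi0) (by simp [hg0])
    · exact ⟨j, hj ▸ hi0⟩
  have hsum : (∑ j, u j) = 0 := by
    have h1 : (∑ j, g j.succ • u j) = g j0.succ • ∑ j, u j := by
      rw [Finset.smul_sum]
      exact Finset.sum_congr rfl fun j _ => by rw [hconst j j0]
    rw [h1] at hrel
    exact (smul_eq_zero.mp hrel).resolve_left hj0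
  -- value of c
  have hcd : c * (d : ℝ) + (2 - c) = 0 := by
    have m0 : Fin d := ⟨0, hd⟩
    have h1 := inner_sum_u (fun _ => (1 : ℝ)) m0
    simp only [one_smul] at h1
    rw [hsum] at h1
    simp at h1
    linarith [h1]
  have hd2 : 2 ≤ d := by
    by_contra h
    have hd1 : d = 1 := by omega
    rw [hd1] at hcd
    norm_num at hcd
  have hdR : (0 : ℝ) < (d : ℝ) - 1 := by
    have : (2 : ℝ) ≤ d := by exact_mod_cast hd2
    linarith
  have hdR0 : (0 : ℝ) < (d : ℝ) := by linarith
  have h2c : (0 : ℝ) < 2 - c := by linarith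
  -- spanning family
  classical
  set F : Fin d → Euc d := fun i => if i = 0 then y else u i with hF
  have m0 : Fin d := ⟨0, hd⟩
  haveI : Nonempty (Fin d) := ⟨⟨0, hd⟩⟩
  have hF0 : F 0 = y := by rw [hF]; simp
  have hFne : ∀ i : Fin d, i ≠ 0 → F i = u i := by intro i hi; rw [hF]; simp [hi]
  have innerFy : ∀ (l : Fin d → ℝ), ⟪∑ i, l i • F i, y⟫ = l 0 * r ^ 2 := by
    intro l
    rw [sum_inner, Finset.sum_eq_single 0]
    · rw [real_inner_smul_left, hF0, hyy]
    · intro b _ hb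
      rw [real_inner_smul_left, hFne b hb, huy b, mul_zero]
    · simp
  have sumFu : ∀ (l : Fin d → ℝ), l 0 = 0 → (∑ i, l i • F i) = ∑ i, l i • u i := by
    intro l hl0
    apply Finset.sum_congr rfl
    intro i _
    by_cases hi : i = 0
    · subst hi; rw [hl0, zero_smul, zero_smul]
    · rw [hFne i hi]
  have hFli : LinearIndependent ℝ F := by
    rw [Fintype.linearIndependent_iff]
    intro l hl
    have hl0 : l 0 = 0 := by
      have h1 : ⟪∑ i, l i • F i, y⟫ = 0 := by rw [hl]; simp
      rw [innerFy] at h1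
      have : r ^ 2 ≠ 0 := by positivity
      exact mul_eq_zero.mp h1 |>.resolve_right this
    have hlu : (∑ i, l i • u i) = 0 := by rw [← sumFu l hl0]; exact hl
    intro i
    have h1 := key l hlu i
    have h0 := key l hlu 0
    rw [hl0, mul_zero, add_zero] at h0
    have hcS : c * (∑ i, l i) = 0 := h0
    rw [hcS, zero_add] at h1
    have : (2 : ℝ) - c ≠ 0 := by linarith
    exact (mul_eq_zero.mp h1).resolve_left this
  have hFspan : Submodule.span ℝ (Set.range F) = ⊤ := by
    apply hFli.span_eq_top_of_card_eq_finrank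
    rw [finrank_euclideanSpace_fin, Fintype.card_fin]
  -- frame identity
  have frame : ∀ w : Euc d, ⟪w, y⟫ = 0 → (∑ j, ⟪w, u j⟫ • u j) = (2 - c) • w := by
    intro w hw
    have hw' : w ∈ Submodule.span ℝ (Set.range F) := by rw [hFspan]; trivial
    obtain ⟨l, hl⟩ := (Submodule.mem_span_range_iff_exists_fun ℝ).mp hw'
    have hl0 : l 0 = 0 := by
      have h1 : ⟪∑ i, l i • F i, y⟫ = 0 := by rw [hl]; exact hw
      rw [innerFy] at h1
      have : r ^ 2 ≠ 0 := by positivity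
      exact mul_eq_zero.mp h1 |>.resolve_right this
    have hwu : w = ∑ i, l i • u i := by rw [← sumFu l hl0, hl]
    have hm : ∀ m, ⟪w, u m⟫ = c * (∑ i, l i) + (2 - c) * l m := by
      intro m
      rw [hwu]; exact inner_sum_u l m
    calc (∑ j, ⟪w, u j⟫ • u j)
        = ∑ j, ((c * (∑ i, l i)) • u j + (2 - c) • (l j • u j)) := by
          apply Finset.sum_congr rfl; intro j _
          rw [hm j, add_smul, smul_smul]
      _ = (c * (∑ i, l i)) • (∑ j, u j) + (2 - c) • (∑ j, l j • u j) := by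
          rw [Finset.sum_add_distrib, Finset.smul_sum, Finset.smul_sum]
      _ = (2 - c) • w := by rw [hsum, smul_zero, zero_add, ← hwu]
  -- geometric preliminaries
  have hir0 : 0 < (r ^ 2)⁻¹ := by positivity
  have hz : y - apexPt r y = (-(r ^ 2)⁻¹) • y := by rw [apexPt]; module
  have habs : |(-(r ^ 2)⁻¹)| = (r ^ 2)⁻¹ := by rw [abs_neg, abs_of_pos hir0]
  have hnz : ‖y - apexPt r y‖ = 1 / r := by
    rw [hz, norm_smul, Real.norm_eq_abs, habs, cfg.norm_y]
    field_simp
  have hxz : ∀ x : Euc d, ⟪x, y - apexPt r y⟫ = -(r ^ 2)⁻¹ * ⟪x, y⟫ := by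
    intro x; rw [hz, real_inner_smul_right]
  have hvz : ∀ j, yv j - apexPt r y = u j + (-(r ^ 2)⁻¹) • y := by
    intro j
    show yv j - apexPt r y = (yv j - y) + (-(r ^ 2)⁻¹) • y
    rw [apexPt]; module
  have hvin : ∀ j, ⟪yv j - apexPt r y, y - apexPt r y⟫ = (r ^ 2)⁻¹ := by
    intro j
    rw [hvz j, hz, inner_add_left, real_inner_smul_right, huy j, mul_zero,
      real_inner_smul_left, real_inner_smul_right, hyy]
    field_simp
    ring
  have hvnorm : ∀ j, ‖yv j - apexPt r y‖ = Real.sqrt (2 + (r ^ 2)⁻¹) := by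
    intro j
    have h1 : ‖yv j - apexPt r y‖ ^ 2 = 2 + (r ^ 2)⁻¹ := by
      rw [hvz j, norm_add_sq_real, hnu2 j, real_inner_smul_right, huy j, mul_zero,
        norm_smul, Real.norm_eq_abs, habs, cfg.norm_y]
      field_simp
      ring
    have h2 := congrArg Real.sqrt h1
    rwa [Real.sqrt_sq (norm_nonneg _)] at h2
  constructor
  · -- inner inclusion
    intro x hx
    have hT0 : 0 < Real.sqrt 2 * r / ((d : ℝ) - 1) :=
      div_pos (mul_pos (Real.sqrt_pos.mpr (by norm_num)) hr) hdR
    set T : ℝ := Real.sqrt 2 * r / ((d : ℝ) - 1) with hT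
    have hcb0 : 0 < Real.cos (Real.arctan T) := Real.cos_arctan_pos T
    set w : Euc d := x - (⟪x, y⟫ * (r ^ 2)⁻¹) • y with hw
    set a : ℝ := -⟪x, y⟫ / r with ha
    have hwy : ⟪w, y⟫ = 0 := by
      rw [hw, inner_sub_left, real_inner_smul_left, hyy]
      field_simp
      ring
    have hxdec : x = w + (⟪x, y⟫ * (r ^ 2)⁻¹) • y := by rw [hw]; abel
    have hx2 : ‖x‖ ^ 2 = a ^ 2 + ‖w‖ ^ 2 := by
      have h1 : ‖x‖ ^ 2 = ‖w‖ ^ 2 + 2 * ((⟪x, y⟫ * (r ^ 2)⁻¹) * ⟪w, y⟫)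
          + (⟪x, y⟫ * (r ^ 2)⁻¹) ^ 2 * r ^ 2 := by
        conv_lhs => rw [hxdec]
        rw [norm_add_sq_real, real_inner_smul_right, norm_smul, Real.norm_eq_abs,
          mul_pow, sq_abs, cfg.norm_y]
        try ring
      rw [hwy, mul_zero, mul_zero, add_zero] at h1
      rw [h1, ha]
      field_simp
      ring
    have hx' : Real.cos (Real.arctan T) * ‖x‖ ≤ a := by
      have h0 : Real.cos (Real.arctan T) * (‖x‖ * (1 / r)) ≤ -(r ^ 2)⁻¹ * ⟪x, y⟫ := by
        have h00 := hx
        rw [circCone, mem_setOf_eq] at h00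
        rw [hnz, hxz] at h00
        exact h00
      have h2 : -(r ^ 2)⁻¹ * ⟪x, y⟫ = a / r := by
        rw [ha]; ring
      rw [h2] at h0
      have h3 := mul_le_mul_of_nonneg_right h0 hr.le
      calc Real.cos (Real.arctan T) * ‖x‖
          = Real.cos (Real.arctan T) * (‖x‖ * (1 / r)) * r := by field_simp
        _ ≤ a / r * r := h3
        _ = a := div_mul_cancel₀ a hr.ne'
    have ha0 : 0 ≤ a := le_trans (mul_nonneg hcb0.le (norm_nonneg x)) hx'
    have hwT : ‖w‖ ≤ T * a := by
      have h1 : (Real.cos (Real.arctan T) * ‖x‖) ^ 2 ≤ a ^ 2 :=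
        pow_le_pow_left₀ (by positivity) hx' 2
      have hc2 : (Real.cos (Real.arctan T)) ^ 2 = 1 / (1 + T ^ 2) := by
        rw [Real.cos_arctan, div_pow, one_pow, Real.sq_sqrt (by positivity)]
      rw [mul_pow, hc2, hx2] at h1
      have h1T : (0:ℝ) < 1 + T ^ 2 := by positivity
      have h3 : ‖w‖ ^ 2 ≤ (T * a) ^ 2 := by
        rw [div_mul_eq_mul_div, div_le_iff₀ h1T] at h1
        nlinarith [h1]
      calc ‖w‖ = Real.sqrt (‖w‖ ^ 2) := (Real.sqrt_sq (norm_nonneg _)).symm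
        _ ≤ Real.sqrt ((T * a) ^ 2) := Real.sqrt_le_sqrt h3
        _ = T * a := Real.sqrt_sq (mul_nonneg hT0.le ha0)
    set κ : ℝ := ((d : ℝ) - 1) / (2 * (d : ℝ)) with hκ
    have hκ0 : 0 ≤ κ := div_nonneg hdR.le (by positivity)
    have h22 : Real.sqrt 2 * Real.sqrt 2 = 2 := Real.mul_self_sqrt (by norm_num)
    have hκT : κ * (Real.sqrt 2 * T) = r / (d : ℝ) := by
      rw [hκ, hT]
      field_simp
      linear_combination h22
    have hκc : κ * (2 - c) = 1 := by
      rw [hκ]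
      rw [div_mul_eq_mul_div, div_eq_one_iff_eq (by positivity)]
      linear_combination -hcd
    set cf : Fin d → ℝ := fun j => a * r / (d : ℝ) + κ * ⟪w, u j⟫ with hcf
    have hcf0 : ∀ j, 0 ≤ cf j := by
      intro j
      have hCS := abs_real_inner_le_norm w (u j)
      rw [hnu j] at hCS
      have h1 : -(‖w‖ * Real.sqrt 2) ≤ ⟪w, u j⟫ := (abs_le.mp hCS).1
      have h4 : κ * (Real.sqrt 2 * ‖w‖) ≤ κ * (Real.sqrt 2 * (T * a)) := by
        refine mul_le_mul_of_nonneg_left ?_ hκ0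
        exact mul_le_mul_of_nonneg_left hwT (Real.sqrt_nonneg 2)
      have h5 : κ * (Real.sqrt 2 * (T * a)) = a * r / (d : ℝ) := by
        have : κ * (Real.sqrt 2 * (T * a)) = (κ * (Real.sqrt 2 * T)) * a := by ring
        rw [this, hκT]; ring
      rw [hcf]
      simp only
      nlinarith [h1, h4, h5, hκ0]
    refine ⟨cf, hcf0, ?_⟩
    have hfw := frame w hwy
    have hsum1 : (∑ j, cf j • u j) = w := by
      have e1 : ∀ j, cf j • u j = (a * r / (d : ℝ)) • u j + κ • (⟪w, u j⟫ • u j) := by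
        intro j; rw [hcf]; simp only; rw [add_smul, smul_smul]
      rw [Finset.sum_congr rfl fun j _ => e1 j, Finset.sum_add_distrib,
        ← Finset.smul_sum, ← Finset.smul_sum, hsum, smul_zero, zero_add, hfw,
        smul_smul, hκc, one_smul]
    have hsumw : (∑ j, ⟪w, u j⟫) = 0 := by
      rw [← inner_sum, hsum, inner_zero_right]
    have hsumcf : (∑ j, cf j) = a * r := by
      rw [hcf]
      simp only
      rw [Finset.sum_add_distrib, ← Finset.mul_sum, hsumw, mul_zero, add_zero,
        Finset.sum_const, Finset.card_univ, Fintype.card_fin, nsmul_eq_mul]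
      field_simp
    have hstep : (∑ j, cf j • (yv j - apexPt r y))
        = (∑ j, cf j • u j) + (∑ j, cf j) • ((-(r ^ 2)⁻¹) • y) := by
      rw [Finset.sum_congr rfl fun j _ => by rw [hvz j, smul_add],
        Finset.sum_add_distrib, ← Finset.sum_smul]
    rw [hstep, hsum1, hsumcf]
    rw [smul_smul]
    conv_lhs => rw [hxdec]
    congr 1
    congr 1
    rw [ha]
    field_simp
  · -- outer inclusion
    rintro x ⟨cf, hcf0, hxe⟩
    show Real.cos (Real.arctan (Real.sqrt 2 * r)) * (‖x‖ * ‖y - apexPt r y‖)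
        ≤ ⟪x, y - apexPt r y⟫
    have hA0 : 0 ≤ ∑ i, cf i := Finset.sum_nonneg fun i _ => hcf0 i
    have hinner : ⟪x, y - apexPt r y⟫ = (∑ i, cf i) * (r ^ 2)⁻¹ := by
      rw [hxe, sum_inner,
        Finset.sum_congr rfl fun j _ => by rw [real_inner_smul_left, hvin j],
        ← Finset.sum_mul]
    have hnorm : ‖x‖ ≤ (∑ i, cf i) * Real.sqrt (2 + (r ^ 2)⁻¹) := by
      rw [hxe]
      calc ‖∑ i, cf i • (yv i - apexPt r y)‖ ≤ ∑ i, ‖cf i • (yv i - apexPt r y)‖ :=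
            norm_sum_le _ _
        _ = ∑ i, cf i * Real.sqrt (2 + (r ^ 2)⁻¹) := by
            refine Finset.sum_congr rfl fun i _ => ?_
            rw [norm_smul, Real.norm_eq_abs, abs_of_nonneg (hcf0 i), hvnorm i]
        _ = (∑ i, cf i) * Real.sqrt (2 + (r ^ 2)⁻¹) := by rw [← Finset.sum_mul]
    have hcosval : Real.cos (Real.arctan (Real.sqrt 2 * r)) * Real.sqrt (2 + (r ^ 2)⁻¹)
        = r * (r ^ 2)⁻¹ := by
      rw [Real.cos_arctan]
      have h1 : 1 + (Real.sqrt 2 * r) ^ 2 = 1 + 2 * r ^ 2 := by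
        rw [mul_pow, Real.sq_sqrt (by norm_num : (0:ℝ) ≤ 2)]
      have h2 : 2 + (r ^ 2)⁻¹ = (1 + 2 * r ^ 2) * (r ^ 2)⁻¹ := by field_simp; ring
      have h3 : Real.sqrt (2 + (r ^ 2)⁻¹) = Real.sqrt (1 + 2 * r ^ 2) / r := by
        rw [h2, Real.sqrt_mul (by positivity), Real.sqrt_inv, Real.sqrt_sq hr.le]
        ring
      have hs0 : (0:ℝ) < Real.sqrt (1 + 2 * r ^ 2) := Real.sqrt_pos.mpr (by positivity)
      rw [h1, h3]
      field_simp
    have hcos0 : 0 ≤ Real.cos (Real.arctan (Real.sqrt 2 * r)) := (Real.cos_arctan_pos _).le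
    rw [hinner, hnz]
    calc Real.cos (Real.arctan (Real.sqrt 2 * r)) * (‖x‖ * (1 / r))
        ≤ Real.cos (Real.arctan (Real.sqrt 2 * r))
            * (((∑ i, cf i) * Real.sqrt (2 + (r ^ 2)⁻¹)) * (1 / r)) := by
          refine mul_le_mul_of_nonneg_left ?_ hcos0
          exact mul_le_mul_of_nonneg_right hnorm (by positivity)
      _ = (∑ i, cf i) * (Real.cos (Real.arctan (Real.sqrt 2 * r))
            * Real.sqrt (2 + (r ^ 2)⁻¹)) / r := by ring
      _ = (∑ i, cf i) * (r * (r ^ 2)⁻¹) / r := by rw [hcosval]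
      _ = (∑ i, cf i) * (r ^ 2)⁻¹ := by field_simp

/-- The internal cone `D = pos{y^j − y⁰ : j = 1,…,d}` of `Δ` at its apex `y⁰` satisfies
`C(y − y⁰, arctan(√2 r/(d−1))) ⊆ D ⊆ C(y − y⁰, arctan(√2 r))`. -/
theorem internal_cone_of_simplex_bounds (d : ℕ) (hd : 1 ≤ d) :
    ∃ N : ℕ, ∀ n : ℕ, N ≤ n →
      ∀ (y : Euc d) (yv : Fin d → Euc d), SimplexConfig d (rr n) y yv →
        circCone (y - apexPt (rr n) y)
            (Real.arctan (Real.sqrt 2 * rr n / ((d : ℝ) - 1))) ⊆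
          posHull (fun j : Fin d => yv j - apexPt (rr n) y) ∧
        posHull (fun j : Fin d => yv j - apexPt (rr n) y) ⊆
          circCone (y - apexPt (rr n) y) (Real.arctan (Real.sqrt 2 * rr n)) := by
  refine ⟨2, fun n hn y yv cfg => ?_⟩
  have h2 : (2 : ℝ) ≤ (n : ℝ) := by exact_mod_cast hn
  have hl : 0 < Real.log n := Real.log_pos (by linarith)
  have hll : Real.log (Real.log n) ≤ Real.log n - 1 := Real.log_le_sub_one_of_pos hl
  have hr : 0 < rr n := by
    simp only [rr]
    exact Real.sqrt_pos.mpr (by linarith)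
  exact simplex_cone_aux d hd (rr n) hr y yv cfg

end
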